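/- Let 0 → K → (kG)^{⊕r} → X → 0 be a short exact sequence of kG-modules, and let j: K → A_n^{⊕r} be the composition of the inclusion K → (kG)^{⊕r} with the injective A_n-linear map (kG)^{⊕r} → A_n^{⊕r} induced in each coordinate by the map kG = A_n/tA_n → A_n given by multiplication by t^{n-1} (i.e., a mod tA_n ↦ t^{n-1}a). Then j is injective, and writing F for the cokernel A_n^{⊕r}/j(K), the kG-module t^{n-1}F is isomorphic to X. -/

import Mathlib

open scoped TensorProduct DirectSum

noncomputable section

variable (S : Type) [CommRing S] [IsDomain S] [IsDiscreteValuationRing S]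
variable (t : S)
variable (G : Type) [Group G] [Fintype G]

/-- `Rq n` is the quotient ring `R_n = S/(t^n)`. -/
abbrev Rq (n : ℕ) : Type := S ⧸ Ideal.span {t ^ n}

/-- `Aq n` is the group algebra `A_n = R_n G`. -/
abbrev Aq (n : ℕ) : Type := MonoidAlgebra (Rq S t n) G

/-- The canonical surjection `R_n → R_i` for `i ≤ n`. -/
def Rmap (i n : ℕ) (h : i ≤ n) : Rq S t n →+* Rq S t i :=
  Ideal.Quotient.factor (Ideal.span_singleton_le_span_singleton.mpr (pow_dvd_pow t h))

/-- The canonical surjection `A_n → A_i` for `i ≤ n`, induced by `R_n → R_i`. -/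
def Amap (i n : ℕ) (h : i ≤ n) : Aq S t G n →+* Aq S t G i :=
  letI : Algebra (Rq S t n) (Aq S t G i) :=
    RingHom.toAlgebra' ((algebraMap (Rq S t i) (Aq S t G i)).comp (Rmap S t i n h))
      (fun r x => Algebra.commutes (Rmap S t i n h r) x)
  ((MonoidAlgebra.lift (Rq S t n) (Aq S t G i) G) (MonoidAlgebra.of (Rq S t i) G)).toRingHom

/-- The augmentation map `A_n → R_n`, `Σ r_g g ↦ Σ r_g`. -/
def aug (n : ℕ) : Aq S t G n →+* Rq S t n :=
  ((MonoidAlgebra.lift (Rq S t n) (Rq S t n) G) 1).toRingHom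

/-- The image of `t` in `R_n`. -/
def tbar (n : ℕ) : Rq S t n := Ideal.Quotient.mk _ t

/-- The norm element `Σ_{g ∈ G} g` of `A_n`. -/
def sigmaEl (n : ℕ) : Aq S t G n := ∑ g : G, MonoidAlgebra.of (Rq S t n) G g

/-- The element `t^{i-1} Σ_{g ∈ G} g` of `A_i`. -/
def wEl (i : ℕ) : Aq S t G i :=
  algebraMap (Rq S t i) (Aq S t G i) (tbar S t i ^ (i - 1)) * sigmaEl S t G i

/-- `W_i = A_i/⟨t^{i-1} Σ_{g∈G} g⟩`. -/
abbrev Wmod (i : ℕ) : Type :=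
  Aq S t G i ⧸ Submodule.span (Aq S t G i) {wEl S t G i}

/-- The submodule `t^m X` of an `A_n`-module `X`. -/
def tSub (n m : ℕ) (X : Type) [AddCommGroup X] [Module (Aq S t G n) X] :
    Submodule (Aq S t G n) X :=
  Submodule.span (Aq S t G n)
    (Set.range fun x : X => algebraMap (Rq S t n) (Aq S t G n) (tbar S t n ^ m) • x)


set_option linter.unusedSectionVars false
section Aux
variable (S : Type) [CommRing S] [IsDomain S] [IsDiscreteValuationRing S]
variable (t : S) (G : Type) [Group G] [Fintype G]

lemma Rmap_mk (i n : ℕ) (h : i ≤ n) (s : S) :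
    Rmap S t i n h (Ideal.Quotient.mk _ s) = Ideal.Quotient.mk _ s := rfl

lemma Rmap_surjective (i n : ℕ) (h : i ≤ n) : Function.Surjective (Rmap S t i n h) := by
  intro x
  obtain ⟨s, rfl⟩ := Ideal.Quotient.mk_surjective x
  exact ⟨Ideal.Quotient.mk _ s, rfl⟩

lemma Amap_single (i n : ℕ) (h : i ≤ n) (g : G) (r : Rq S t n) :
    Amap S t G i n h (MonoidAlgebra.single g r) = MonoidAlgebra.single g (Rmap S t i n h r) := by
  unfold Amap
  simp only [MonoidAlgebra.lift_single, AlgHom.toRingHom_eq_coe, RingHom.coe_coe,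
    Algebra.smul_def, RingHom.algebraMap_toAlgebra', RingHom.coe_comp, Function.comp_apply,
    MonoidAlgebra.coe_algebraMap, MonoidAlgebra.of_apply]
  rw [MonoidAlgebra.single_mul_single, one_mul, mul_one]; rfl

lemma Amap_apply (i n : ℕ) (h : i ≤ n) (a : Aq S t G n) (g : G) :
    (Amap S t G i n h a).coeff g = Rmap S t i n h (a.coeff g) := by
  induction a using MonoidAlgebra.induction with
  | zero => simp
  | single_add g' r f hg' hr ih =>
    classical
    rw [map_add, Amap_single, MonoidAlgebra.coeff_add, Finsupp.add_apply, MonoidAlgebra.coeff_add,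
      Finsupp.add_apply, map_add, ih]
    congr 1
    rw [MonoidAlgebra.coeff_single_apply, MonoidAlgebra.coeff_single_apply, apply_ite (Rmap S t i n h), map_zero]

lemma Amap_surjective (i n : ℕ) (h : i ≤ n) : Function.Surjective (Amap S t G i n h) := by
  intro x
  induction x using MonoidAlgebra.induction with
  | zero => exact ⟨0, map_zero _⟩
  | single_add g' r f hg' hr ih =>
    obtain ⟨a, ha⟩ := ih
    obtain ⟨r', hr'⟩ := Rmap_surjective S t i n h r
    exact ⟨MonoidAlgebra.single g' r' + a, by rw [map_add, Amap_single, ha, hr']⟩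

end Aux

section Aux2
variable (S : Type) [CommRing S] [IsDomain S] [IsDiscreteValuationRing S]
variable (t : S) (G : Type) [Group G] [Fintype G]

lemma key_R (ht : Irreducible t) (n : ℕ) (hn : 1 ≤ n) (r : Rq S t n) :
    tbar S t n ^ (n - 1) * r = 0 ↔ Rmap S t 1 n hn r = 0 := by
  obtain ⟨s, rfl⟩ := Ideal.Quotient.mk_surjective r
  have htbar : tbar S t n ^ (n-1) = Ideal.Quotient.mk _ (t ^ (n-1)) := by
    rw [tbar, ← map_pow]
  rw [htbar, Rmap_mk, ← map_mul, Ideal.Quotient.eq_zero_iff_mem,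
    Ideal.Quotient.eq_zero_iff_mem, Ideal.mem_span_singleton, Ideal.mem_span_singleton, pow_one]
  constructor
  · rintro ⟨u, hu⟩
    refine ⟨u, ?_⟩
    have hpow : t ^ (n-1) * s = t ^ (n-1) * (t * u) := by
      rw [hu, ← mul_assoc, ← pow_succ]
      congr 2
      omega
    have htne : t ^ (n-1) ≠ 0 := pow_ne_zero _ ht.ne_zero
    exact mul_left_cancel₀ htne hpow
  · rintro ⟨u, rfl⟩
    exact ⟨u, by rw [← mul_assoc, ← pow_succ]; congr 2; omega⟩

end Aux2

section Aux3
variable (S : Type) [CommRing S] [IsDomain S] [IsDiscreteValuationRing S]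
variable (t : S) (G : Type) [Group G] [Fintype G]

lemma T_mul_apply (n : ℕ) (a : Aq S t G n) (g : G) :
    (algebraMap (Rq S t n) (Aq S t G n) (tbar S t n ^ (n - 1)) * a).coeff g
      = tbar S t n ^ (n - 1) * a.coeff g := by
  have hT : algebraMap (Rq S t n) (Aq S t G n) (tbar S t n ^ (n - 1))
      = MonoidAlgebra.single 1 (tbar S t n ^ (n - 1)) := by
    rw [MonoidAlgebra.coe_algebraMap]; simp
  rw [hT, MonoidAlgebra.coeff_single_one_mul]

lemma key_A (ht : Irreducible t) (n : ℕ) (hn : 1 ≤ n) (a : Aq S t G n) :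
    algebraMap (Rq S t n) (Aq S t G n) (tbar S t n ^ (n - 1)) * a = 0
      ↔ Amap S t G 1 n hn a = 0 := by
  rw [← MonoidAlgebra.coeff_eq_zero, ← MonoidAlgebra.coeff_eq_zero, Finsupp.ext_iff, Finsupp.ext_iff]
  refine forall_congr' fun g => ?_
  rw [T_mul_apply, Amap_apply]
  simp only [Finsupp.coe_zero, Pi.zero_apply]
  exact key_R S t ht n hn (a.coeff g)

end Aux3


set_option maxHeartbeats 2000000 in
set_option synthInstance.maxHeartbeats 1000000 in
/-- Let `0 → K → (kG)^{⊕r} → X → 0` be a short exact sequence of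
`kG`-modules, and let `j : K → A_n^{⊕r}` be the composition of the inclusion
`K → (kG)^{⊕r}` with the injective `A_n`-linear map `(kG)^{⊕r} → A_n^{⊕r}` induced in each
coordinate by the map `kG = A_n/tA_n → A_n`, `a mod tA_n ↦ t^{n-1}a`.  Then `j` is
injective, and writing `F` for the cokernel `A_n^{⊕r}/j(K)`, the `kG`-module `t^{n-1}F`
is isomorphic to `X`. -/
theorem statement12 (ht : Irreducible t) (n : ℕ) (hn : 1 ≤ n) (r : ℕ)
    (K X : Type) [AddCommGroup K] [Module (Aq S t G 1) K]
    [AddCommGroup X] [Module (Aq S t G 1) X]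
    (ι : K →ₗ[Aq S t G 1] (Fin r → Aq S t G 1))
    (π : (Fin r → Aq S t G 1) →ₗ[Aq S t G 1] X)
    (hι : Function.Injective ι) (hπ : Function.Surjective π)
    (hexact : LinearMap.range ι = LinearMap.ker π) :
    letI : Module (Aq S t G n) (Aq S t G 1) := Module.compHom _ (Amap S t G 1 n hn)
    (∃ μ : Aq S t G 1 →ₗ[Aq S t G n] Aq S t G n,
        ∀ a : Aq S t G n,
          μ (Amap S t G 1 n hn a) =
            algebraMap (Rq S t n) (Aq S t G n) (tbar S t n ^ (n - 1)) * a) ∧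
      ∀ μ : Aq S t G 1 →ₗ[Aq S t G n] Aq S t G n,
        (∀ a : Aq S t G n,
          μ (Amap S t G 1 n hn a) =
            algebraMap (Rq S t n) (Aq S t G n) (tbar S t n ^ (n - 1)) * a) →
        Function.Injective (fun x : K => fun i : Fin r => μ (ι x i)) ∧
          ∃ inst : Module (Aq S t G 1)
              ↥(tSub S t G n (n - 1)
                ((Fin r → Aq S t G n) ⧸
                  Submodule.span (Aq S t G n)
                    (Set.range fun x : K => fun i : Fin r => μ (ι x i)))),
            (∀ (a : Aq S t G n)
              (y : ↥(tSub S t G n (n - 1)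
                ((Fin r → Aq S t G n) ⧸
                  Submodule.span (Aq S t G n)
                    (Set.range fun x : K => fun i : Fin r => μ (ι x i))))),
              letI := inst
              Amap S t G 1 n hn a • y = a • y) ∧
            letI := inst
            Nonempty
              (↥(tSub S t G n (n - 1)
                  ((Fin r → Aq S t G n) ⧸
                    Submodule.span (Aq S t G n)
                      (Set.range fun x : K => fun i : Fin r => μ (ι x i))))
                ≃ₗ[Aq S t G 1] X) := by
  classical
  letI _inst : Module (Aq S t G n) (Aq S t G 1) := Module.compHom _ (Amap S t G 1 n hn)
  set A := Aq S t G n with hA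
  set B := Aq S t G 1 with hB
  set φ := Amap S t G 1 n hn with hφ
  set T : A := algebraMap (Rq S t n) (Aq S t G n) (tbar S t n ^ (n - 1)) with hT
  have hAs : Function.Surjective φ := Amap_surjective S t G 1 n hn
  have hsm : ∀ (a : A) (x : B), a • x = φ a * x := fun a x => rfl
  have hcomm : ∀ a : A, a * T = T * a := fun a =>
    (Algebra.commutes (tbar S t n ^ (n - 1)) a).symm
  have hkey : ∀ a : A, T * a = 0 ↔ φ a = 0 := fun a => key_A S t G ht n hn a
  -- construct μ
  have hmu : ∃ μ : B →ₗ[A] A, ∀ a : A, μ (φ a) = T * a := by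
    let AmapL : A →ₗ[A] B :=
      { toFun := φ
        map_add' := map_add φ
        map_smul' := fun a b => by
          simp only [smul_eq_mul, map_mul, RingHom.id_apply]
          rw [hsm] }
    let mulT : A →ₗ[A] A :=
      { toFun := fun x => x * T
        map_add' := fun x y => add_mul x y T
        map_smul' := fun a x => by simp only [smul_eq_mul, RingHom.id_apply, mul_assoc] }
    have hIle : LinearMap.ker AmapL ≤ LinearMap.ker mulT := by
      intro a ha
      simp only [LinearMap.mem_ker] at ha ⊢
      show a * T = 0
      rw [hcomm]
      exact (hkey a).mpr ha
    let ℓ : (A ⧸ LinearMap.ker AmapL) →ₗ[A] B := Submodule.liftQ _ AmapL le_rfl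
    have hℓbij : Function.Bijective ℓ := by
      constructor
      · rw [← LinearMap.ker_eq_bot]
        exact Submodule.ker_liftQ_eq_bot _ _ _ le_rfl
      · intro c
        obtain ⟨a, ha⟩ := hAs c
        exact ⟨Submodule.Quotient.mk a, ha⟩
    let eℓ := LinearEquiv.ofBijective ℓ hℓbij
    refine ⟨(Submodule.liftQ _ mulT hIle).comp (eℓ.symm : B →ₗ[A] _), fun a => ?_⟩
    have h1 : eℓ.symm (φ a) = Submodule.Quotient.mk a := by
      apply eℓ.injective
      rw [LinearEquiv.apply_symm_apply]
      rfl
    show (Submodule.liftQ _ mulT hIle) (eℓ.symm (φ a)) = T * a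
    rw [h1, Submodule.liftQ_apply]
    exact hcomm a
  refine ⟨hmu, ?_⟩
  intro μ hμ
  -- basic facts about μ
  have hμc : ∀ c : B, ∃ a : A, φ a = c ∧ μ c = T * a := by
    intro c
    obtain ⟨a, ha⟩ := hAs c
    exact ⟨a, ha, by rw [← ha, hμ]⟩
  have hμ0 : ∀ c : B, μ c = 0 → c = 0 := by
    intro c h0
    obtain ⟨a, ha, he⟩ := hμc c
    rw [he] at h0
    rw [← ha]
    exact (hkey a).mp h0
  have hμinj : Function.Injective μ := by
    intro c d h
    have := hμ0 (c - d) (by rw [map_sub, h, sub_self])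
    exact sub_eq_zero.mp this
  have hμlin : ∀ (a : A) (c : B), μ (φ a * c) = a * μ c := by
    intro a c
    rw [← hsm, map_smul, smul_eq_mul]
  set j : K → (Fin r → A) := fun x => fun i => μ (ι x i) with hj
  have hjadd : ∀ x y : K, j (x + y) = j x + j y := by
    intro x y
    funext i
    show μ (ι (x + y) i) = μ (ι x i) + μ (ι y i)
    rw [map_add, Pi.add_apply, map_add]
  have hjsmul : ∀ (a : A) (x : K), a • j x = j (φ a • x) := by
    intro a x
    funext i
    show a • μ (ι x i) = μ (ι (φ a • x) i)
    rw [map_smul, Pi.smul_apply, smul_eq_mul, smul_eq_mul, hμlin]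
  let JS : Submodule A (Fin r → A) :=
    { carrier := Set.range j
      add_mem' := by rintro _ _ ⟨x, rfl⟩ ⟨y, rfl⟩; exact ⟨x + y, hjadd x y⟩
      zero_mem' := ⟨0, by funext i; simp [hj]⟩
      smul_mem' := by rintro a _ ⟨x, rfl⟩; exact ⟨φ a • x, (hjsmul a x).symm⟩ }
  set P := Submodule.span A (Set.range j) with hP
  have hPJS : P = JS := by
    rw [hP]
    exact Submodule.span_eq JS
  have hmemP : ∀ v, v ∈ P ↔ ∃ x, j x = v := by
    intro v
    rw [hPJS]
    exact Iff.rfl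
  -- injectivity of j
  refine ⟨?_, ?_⟩
  · intro x y h
    apply hι
    funext i
    exact hμinj (congrFun h i)
  -- the module structure on t^{n-1} F
  set F := (Fin r → A) ⧸ P with hF
  set N := tSub S t G n (n - 1) F with hN
  have hNspan : N = Submodule.span A (Set.range fun x : F => T • x) := rfl
  have hann : ∀ y : F, y ∈ N → ∀ a : A, φ a = 0 → a • y = 0 := by
    intro y hy
    rw [hNspan] at hy
    induction hy using Submodule.span_induction with
    | mem z hz =>
      obtain ⟨x, rfl⟩ := hz
      intro a ha
      rw [smul_smul, show a * T = 0 by rw [hcomm]; exact (hkey a).mpr ha, zero_smul]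
    | zero => intro a _; rw [smul_zero]
    | add z w _ _ ihz ihw => intro a ha; rw [smul_add, ihz a ha, ihw a ha, add_zero]
    | smul b z _ ihz =>
      intro a ha
      rw [smul_smul]
      have : φ (a * b) = 0 := by rw [map_mul, ha, zero_mul]
      exact ihz (a * b) this
  have hdep : ∀ (a b : A) (y : N), φ a = φ b → a • y = b • y := by
    intro a b y h
    apply Subtype.ext
    have h0 : (a - b) • (y : F) = 0 := hann y y.2 (a - b) (by rw [map_sub, h, sub_self])
    rw [sub_smul, sub_eq_zero] at h0
    exact h0
  choose sec hsec using hAs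
  letI inst : Module B N :=
    { smul := fun c y => sec c • y
      one_smul := fun y => by
        show sec 1 • y = y
        rw [hdep (sec 1) 1 y (by rw [hsec, map_one]), one_smul]
      mul_smul := fun c d y => by
        show sec (c * d) • y = sec c • sec d • y
        rw [smul_smul, hdep (sec (c * d)) (sec c * sec d) y
          (by rw [hsec, map_mul, hsec, hsec])]
      smul_zero := fun c => smul_zero (sec c)
      smul_add := fun c y z => smul_add (sec c) y z
      add_smul := fun c d y => by
        show sec (c + d) • y = sec c • y + sec d • y
        rw [hdep (sec (c + d)) (sec c + sec d) y (by rw [hsec, map_add, hsec, hsec]),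
          add_smul]
      zero_smul := fun y => by
        show sec 0 • y = 0
        rw [hdep (sec 0) 0 y (by rw [hsec, map_zero]), zero_smul] }
  have hcompat : ∀ (a : A) (y : N), φ a • y = a • y := by
    intro a y
    show sec (φ a) • y = a • y
    exact hdep _ _ y (hsec _)
  refine ⟨inst, hcompat, ?_⟩
  -- the linear map Φ
  have hμT : ∀ c : B, μ c = T * sec c := by
    intro c
    conv_lhs => rw [← hsec c]
    rw [hμ]
  have hmemΦ : ∀ v : Fin r → B,
      (Submodule.Quotient.mk (fun i => μ (v i)) : F) ∈ N := by
    intro v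
    have : (fun i => μ (v i)) = T • fun i => sec (v i) := by
      funext i
      rw [Pi.smul_apply, smul_eq_mul, hμT]
    rw [this, Submodule.Quotient.mk_smul, hNspan]
    exact Submodule.subset_span ⟨_, rfl⟩
  let Φ : (Fin r → B) →ₗ[B] N :=
    { toFun := fun v => ⟨Submodule.Quotient.mk (fun i => μ (v i)), hmemΦ v⟩
      map_add' := fun v w => by
        apply Subtype.ext
        show Submodule.Quotient.mk _ = Submodule.Quotient.mk _ + Submodule.Quotient.mk _
        rw [← Submodule.Quotient.mk_add]
        congr 1
        funext i
        simp [map_add]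
      map_smul' := fun c v => Subtype.ext (by
        show (Submodule.Quotient.mk fun i => μ ((c • v) i) : F)
            = sec c • (Submodule.Quotient.mk fun i => μ (v i) : F)
        have h1 : (fun i => μ ((c • v) i)) = sec c • fun i => μ (v i) := by
          funext i
          rw [Pi.smul_apply, Pi.smul_apply, smul_eq_mul, smul_eq_mul, ← hμlin, hsec]
        rw [h1]
        exact Submodule.Quotient.mk_smul P _ _) }
  have hΦsurj : ∀ y : N, ∃ v, Φ v = y := by
    have key : ∀ z : F, z ∈ Submodule.span A (Set.range fun x : F => T • x) →
        ∃ v, (Φ v : F) = z := by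
      intro z hz
      induction hz using Submodule.span_induction with
      | mem z hz =>
        obtain ⟨x, rfl⟩ := hz
        obtain ⟨w, rfl⟩ := Submodule.Quotient.mk_surjective P x
        refine ⟨fun i => φ (w i), ?_⟩
        show Submodule.Quotient.mk _ = T • Submodule.Quotient.mk w
        rw [← Submodule.Quotient.mk_smul]
        congr 1
        funext i
        rw [hμ, Pi.smul_apply, smul_eq_mul]
      | zero =>
        refine ⟨0, ?_⟩
        show Submodule.Quotient.mk _ = (0 : F)
        rw [← Submodule.Quotient.mk_zero (p := P)]
        congr 1
        funext i
        simp
      | add z w hz hw ihz ihw =>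
        obtain ⟨v1, hv1⟩ := ihz
        obtain ⟨v2, hv2⟩ := ihw
        refine ⟨v1 + v2, ?_⟩
        show Submodule.Quotient.mk _ = z + w
        rw [← hv1, ← hv2]
        show _ = ((Φ v1 + Φ v2 : N) : F)
        rw [← map_add]
        rfl
      | smul a z hz ihz =>
        obtain ⟨v, hv⟩ := ihz
        refine ⟨φ a • v, ?_⟩
        show Submodule.Quotient.mk _ = a • z
        rw [← hv]
        show _ = a • (Submodule.Quotient.mk fun i => μ (v i) : F)
        rw [← Submodule.Quotient.mk_smul]
        congr 1
        funext i
        rw [Pi.smul_apply, Pi.smul_apply, smul_eq_mul, smul_eq_mul, hμlin]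
    intro y
    obtain ⟨v, hv⟩ := key (y : F) y.2
    exact ⟨v, Subtype.ext hv⟩
  have hkerΦ : ∀ v, Φ v = 0 ↔ v ∈ LinearMap.ker π := by
    intro v
    rw [← hexact]
    constructor
    · intro h
      have h0 : (Submodule.Quotient.mk (fun i => μ (v i)) : F) = 0 :=
        congrArg Subtype.val h
      rw [Submodule.Quotient.mk_eq_zero] at h0
      obtain ⟨x, hx⟩ := (hmemP _).mp h0
      refine ⟨x, ?_⟩
      funext i
      exact hμinj (congrFun hx i)
    · rintro ⟨x, rfl⟩
      apply Subtype.ext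
      show (Submodule.Quotient.mk (fun i => μ (ι x i)) : F) = 0
      rw [Submodule.Quotient.mk_eq_zero]
      exact (hmemP _).mpr ⟨x, rfl⟩
  have hle : LinearMap.ker π ≤ LinearMap.ker Φ := fun v hv => (hkerΦ v).mpr hv
  let Φbar := Submodule.liftQ (LinearMap.ker π) Φ hle
  have hbij : Function.Bijective Φbar := by
    constructor
    · rw [← LinearMap.ker_eq_bot]
      exact Submodule.ker_liftQ_eq_bot _ _ _ (fun v hv => (hkerΦ v).mp hv)
    · intro y
      obtain ⟨v, hv⟩ := hΦsurj y
      exact ⟨Submodule.Quotient.mk v, hv⟩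
  exact ⟨((LinearEquiv.ofBijective Φbar hbij).symm.trans
    (π.quotKerEquivOfSurjective hπ) : N ≃ₗ[B] X).symm.symm⟩

end
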